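/- Let μ0 and μ1 be probability measures on ℝ with μ0 atomless. Let F_0 be the cumulative distribution function of μ0 and Q_1 the generalized inverse of the cumulative distribution function of μ1. If T : ℝ → ℝ is a nondecreasing measurable map whose pushforward of μ0 equals μ1, then T(x) = Q_1(F_0(x)) for μ0-almost every x. -/

import Mathlib

open MeasureTheory Set

section Stmt6Aux

variable {μ : Measure ℝ}

private lemma cdf_mono (μ : Measure ℝ) [IsFiniteMeasure μ] :
    Monotone (fun x => (μ (Iic x)).toReal) := fun a b hab =>
  ENNReal.toReal_mono (measure_ne_top μ _) (measure_mono (Iic_subset_Iic.2 hab))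

private lemma Iic_eq_ofReal (μ : Measure ℝ) [IsFiniteMeasure μ] (x : ℝ) :
    μ (Iic x) = ENNReal.ofReal ((μ (Iic x)).toReal) :=
  (ENNReal.ofReal_toReal (measure_ne_top μ _)).symm

/-- The cdf gets below any positive level. -/
private lemma exists_cdf_lt (μ : Measure ℝ) [IsProbabilityMeasure μ] {ε : ℝ} (hε : 0 < ε) :
    ∃ z : ℝ, (μ (Iic z)).toReal < ε := by
  by_contra h
  push_neg at h
  have hinter : ⋂ n : ℕ, Iic (-(n : ℝ)) = (∅ : Set ℝ) := by
    ext x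
    simp only [mem_iInter, mem_Iic, mem_empty_iff_false, iff_false, not_forall]
    obtain ⟨n, hn⟩ := exists_nat_gt (-x)
    exact ⟨n, by push_neg; linarith⟩
  have htend : Filter.Tendsto (μ ∘ fun n : ℕ => Iic (-(n : ℝ))) Filter.atTop
      (nhds (μ (⋂ n : ℕ, Iic (-(n : ℝ))))) :=
    tendsto_measure_iInter_atTop (fun n => measurableSet_Iic.nullMeasurableSet)
      (fun n m hnm => Iic_subset_Iic.2 (by exact_mod_cast neg_le_neg (by exact_mod_cast hnm)))
      ⟨0, measure_ne_top μ _⟩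
  rw [hinter, measure_empty] at htend
  have hge : ∀ n : ℕ, ENNReal.ofReal ε ≤ (μ ∘ fun n : ℕ => Iic (-(n : ℝ))) n := by
    intro n
    calc ENNReal.ofReal ε ≤ ENNReal.ofReal ((μ (Iic (-(n : ℝ)))).toReal) :=
          ENNReal.ofReal_le_ofReal (h _)
      _ = μ (Iic (-(n : ℝ))) := (Iic_eq_ofReal μ _).symm
  have := ge_of_tendsto' htend hge
  simp only [nonpos_iff_eq_zero, ENNReal.ofReal_eq_zero] at this
  linarith

/-- Measure of a sublevel set of the cdf (atomless case). -/
private lemma meas_cdf_le (μ : Measure ℝ) [IsProbabilityMeasure μ] [NullSingletonClass μ] (c : ℝ) :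
    μ {x | (μ (Iic x)).toReal ≤ c} ≤ ENNReal.ofReal c := by
  set B := {x | (μ (Iic x)).toReal ≤ c} with hBdef
  have hlow : IsLowerSet B := fun a b hba ha => le_trans (cdf_mono μ hba) ha
  rcases B.eq_empty_or_nonempty with he | hne
  · simp [he]
  rcases (em (BddAbove B)) with hbdd | hbdd
  · set a := sSup B with ha
    have hmem : ∀ n : ℕ, a - ((n : ℝ) + 1)⁻¹ ∈ B := by
      intro n
      obtain ⟨b, hbB, hb⟩ := exists_lt_of_lt_csSup hne
        (show a - ((n : ℝ) + 1)⁻¹ < a by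
          have : (0 : ℝ) < ((n : ℝ) + 1)⁻¹ := by positivity
          linarith)
      exact hlow (le_of_lt hb) hbB
    have hsub : B ⊆ Iic a := fun x hx => le_csSup hbdd hx
    have h1 : μ B ≤ μ (Iio a) := by
      rw [measure_congr (Iio_ae_eq_Iic (a := a) (μ := μ))]
      exact measure_mono hsub
    have hIio : Iio a = ⋃ n : ℕ, Iic (a - ((n : ℝ) + 1)⁻¹) := by
      ext x
      simp only [mem_Iio, mem_iUnion, mem_Iic]
      constructor
      · intro hx
        obtain ⟨n, hn⟩ := exists_nat_one_div_lt (show (0 : ℝ) < a - x by linarith)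
        rw [one_div] at hn
        exact ⟨n, by linarith⟩
      · rintro ⟨n, hn⟩
        have : (0 : ℝ) < ((n : ℝ) + 1)⁻¹ := by positivity
        linarith
    have hmono : Monotone fun n : ℕ => Iic (a - ((n : ℝ) + 1)⁻¹) := by
      intro n m hnm
      apply Iic_subset_Iic.2
      have h1 : ((m : ℝ) + 1)⁻¹ ≤ ((n : ℝ) + 1)⁻¹ := by
        apply inv_anti₀ (by positivity)
        exact_mod_cast add_le_add_left (Nat.cast_le.2 hnm) 1
      linarith
    have h2 : μ (Iio a) = ⨆ n : ℕ, μ (Iic (a - ((n : ℝ) + 1)⁻¹)) := by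
      rw [hIio, hmono.measure_iUnion]
    refine h1.trans (h2.le.trans (iSup_le fun n => ?_))
    rw [Iic_eq_ofReal μ]
    exact ENNReal.ofReal_le_ofReal (hmem n)
  · have hBuniv : B = univ := by
      apply eq_univ_of_forall
      intro x
      rcases not_bddAbove_iff.1 hbdd x with ⟨b, hbB, hb⟩
      exact hlow (le_of_lt hb) hbB
    have huniv : (univ : Set ℝ) = ⋃ n : ℕ, Iic (n : ℝ) := by
      ext x
      simp only [mem_univ, mem_iUnion, mem_Iic, true_iff]
      obtain ⟨n, hn⟩ := exists_nat_gt x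
      exact ⟨n, hn.le⟩
    have hmono : Monotone fun n : ℕ => Iic ((n : ℝ)) :=
      fun n m hnm => Iic_subset_Iic.2 (Nat.cast_le.2 hnm)
    calc μ B = μ (univ : Set ℝ) := by rw [hBuniv]
      _ = ⨆ n : ℕ, μ (Iic (n : ℝ)) := by rw [huniv, hmono.measure_iUnion]
      _ ≤ ENNReal.ofReal c := iSup_le fun n => by
          rw [Iic_eq_ofReal μ]
          exact ENNReal.ofReal_le_ofReal (by
            have : (n : ℝ) ∈ B := hBuniv ▸ mem_univ _
            exact this)

/-- Measure of a strict superlevel set of the cdf (atomless case). -/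
private lemma meas_cdf_gt (μ : Measure ℝ) [IsProbabilityMeasure μ] [NullSingletonClass μ] (d : ℝ) :
    μ {x | d < (μ (Iic x)).toReal} ≤ 1 - ENNReal.ofReal d := by
  set U := {x | d < (μ (Iic x)).toReal} with hUdef
  have hup : IsUpperSet U := fun a b hab ha => lt_of_lt_of_le ha (cdf_mono μ hab)
  rcases U.eq_empty_or_nonempty with he | hne
  · simp [he]
  rcases (em (BddBelow U)) with hbdd | hbdd
  · set a := sInf U with ha
    have hsub : U ⊆ Ici a := fun x hx => csInf_le hbdd hx
    have h1 : μ U ≤ μ (Ioi a) := by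
      rw [measure_congr (Ioi_ae_eq_Ici (a := a) (μ := μ))]
      exact measure_mono hsub
    have hIoi : Ioi a = ⋃ n : ℕ, Ici (a + ((n : ℝ) + 1)⁻¹) := by
      ext x
      simp only [mem_Ioi, mem_iUnion, mem_Ici]
      constructor
      · intro hx
        obtain ⟨n, hn⟩ := exists_nat_one_div_lt (show (0 : ℝ) < x - a by linarith)
        rw [one_div] at hn
        exact ⟨n, by linarith⟩
      · rintro ⟨n, hn⟩
        have : (0 : ℝ) < ((n : ℝ) + 1)⁻¹ := by positivity
        linarith
    have hmono : Monotone fun n : ℕ => Ici (a + ((n : ℝ) + 1)⁻¹) := by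
      intro n m hnm
      apply Ici_subset_Ici.2
      have h1 : ((m : ℝ) + 1)⁻¹ ≤ ((n : ℝ) + 1)⁻¹ := by
        apply inv_anti₀ (by positivity)
        exact_mod_cast add_le_add_left (Nat.cast_le.2 hnm) 1
      linarith
    have h2 : μ (Ioi a) = ⨆ n : ℕ, μ (Ici (a + ((n : ℝ) + 1)⁻¹)) := by
      rw [hIoi, hmono.measure_iUnion]
    refine h1.trans (h2.le.trans (iSup_le fun n => ?_))
    have hpos : (0 : ℝ) < ((n : ℝ) + 1)⁻¹ := by positivity
    obtain ⟨u, huU, hu⟩ := exists_lt_of_csInf_lt hne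
      (show a < a + ((n : ℝ) + 1)⁻¹ by linarith)
    have hsub2 : Ici (a + ((n : ℝ) + 1)⁻¹) ⊆ Ioi u := fun x hx => lt_of_lt_of_le hu hx
    calc μ (Ici (a + ((n : ℝ) + 1)⁻¹)) ≤ μ (Ioi u) := measure_mono hsub2
      _ = 1 - μ (Iic u) := by
          rw [← compl_Iic, measure_compl measurableSet_Iic (measure_ne_top μ _), measure_univ]
      _ ≤ 1 - ENNReal.ofReal d := by
          apply tsub_le_tsub_left
          rw [Iic_eq_ofReal μ]
          exact ENNReal.ofReal_le_ofReal (le_of_lt huU)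
  · -- U unbounded below: U = univ, and then d ≤ 0
    have hUuniv : U = univ := by
      apply eq_univ_of_forall
      intro x
      rcases not_bddBelow_iff.1 hbdd x with ⟨b, hbB, hb⟩
      exact hup (le_of_lt hb) hbB
    have hd : d ≤ 0 := by
      by_contra hd
      push_neg at hd
      obtain ⟨z, hz⟩ := exists_cdf_lt μ hd
      have : z ∈ U := hUuniv ▸ mem_univ _
      exact absurd this (by simpa [hUdef] using hz.le)
    rw [ENNReal.ofReal_eq_zero.2 hd, tsub_zero]
    exact prob_le_one

/-- Intersection of a lower set and an upper set with complementary measure bounds is null. -/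
private lemma lower_inter_upper_null [IsProbabilityMeasure μ] {B C : Set ℝ}
    (hB : IsLowerSet B) (hC : IsUpperSet C) (hCm : MeasurableSet C)
    (h : μ B + μ C ≤ 1) : μ (B ∩ C) = 0 := by
  rcases (B ∩ C).eq_empty_or_nonempty with he | ⟨z, hzB, hzC⟩
  · simp [he]
  · have hu : B ∪ C = univ := eq_univ_of_forall fun x =>
      (le_total x z).imp (fun h' => hB h' hzB) (fun h' => hC h' hzC)
    have hie : μ (B ∪ C) + μ (B ∩ C) = μ B + μ C := measure_union_add_inter B hCm
    rw [hu, measure_univ] at hie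
    have : 1 + μ (B ∩ C) ≤ 1 + 0 := by rw [hie, add_zero]; exact h
    simpa using ENNReal.le_of_add_le_add_left (by simp) this

end Stmt6Aux

/-- Uniqueness of the monotone transport map: if `μ0` is atomless and `T` is a nondecreasing
measurable map pushing `μ0` to `μ1`, then `T` coincides `μ0`-a.e. with the monotone
rearrangement `Q1 ∘ F0`. -/
theorem stmt_6 (μ0 μ1 : Measure ℝ) [IsProbabilityMeasure μ0] [IsProbabilityMeasure μ1]
    [NullSingletonClass μ0]
    (F0 F1 : ℝ → ℝ)
    (hF0 : ∀ x, F0 x = (μ0 (Iic x)).toReal)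
    (hF1 : ∀ x, F1 x = (μ1 (Iic x)).toReal)
    (Q1 : ℝ → ℝ) (hQ1 : ∀ u, Q1 u = sInf {x : ℝ | u ≤ F1 x})
    (T : ℝ → ℝ) (hTmono : Monotone T) (hTmeas : Measurable T)
    (hTpush : Measure.map T μ0 = μ1) :
    ∀ᵐ x ∂μ0, T x = Q1 (F0 x) := by
  have hF0mono : Monotone F0 := by
    intro a b hab; rw [hF0, hF0]; exact cdf_mono μ0 hab
  have hF1mono : Monotone F1 := by
    intro a b hab; rw [hF1, hF1]; exact cdf_mono μ1 hab
  -- pushforward identity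
  have hpush : ∀ s : Set ℝ, MeasurableSet s → μ0 (T ⁻¹' s) = μ1 s := by
    intro s hs
    rw [← hTpush, Measure.map_apply hTmeas hs]
  -- key pointwise inequality: F0 x ≤ F1 (T x)
  have hkey : ∀ x, F0 x ≤ F1 (T x) := by
    intro x
    rw [hF0, hF1]
    have hs : Iic x ⊆ T ⁻¹' (Iic (T x)) := fun y hy => hTmono hy
    have := (measure_mono hs).trans (hpush (Iic (T x)) measurableSet_Iic).le
    exact ENNReal.toReal_mono (measure_ne_top μ1 _) this
  -- the set S x is nonempty
  have hSne : ∀ x, {z : ℝ | F0 x ≤ F1 z}.Nonempty := fun x => ⟨T x, hkey x⟩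
  -- bad sets
  set bad1 : ℚ → Set ℝ := fun q => {x | Q1 (F0 x) < q ∧ (q : ℝ) < T x} with hbad1
  set bad2 : ℚ → Set ℝ := fun q => {x | T x < q ∧ (q : ℝ) < Q1 (F0 x) ∧ 0 < F0 x} with hbad2
  have hbad1null : ∀ q : ℚ, μ0 (bad1 q) = 0 := by
    intro q
    set c : ℝ := (μ1 (Iio (q : ℝ))).toReal with hc
    have hsub : bad1 q ⊆ {x | F0 x ≤ c} ∩ (T ⁻¹' (Ioi (q : ℝ))) := by
      rintro x ⟨h1, h2⟩
      refine ⟨?_, h2⟩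
      rw [hQ1] at h1
      have hy : ∃ y ∈ {z : ℝ | F0 x ≤ F1 z}, y < (q : ℝ) := by
        rcases em (BddBelow {z : ℝ | F0 x ≤ F1 z}) with hb | hb
        · exact exists_lt_of_csInf_lt (hSne x) h1
        · rcases not_bddBelow_iff.1 hb (q : ℝ) with ⟨y, hyS, hyq⟩
          exact ⟨y, hyS, hyq⟩
      obtain ⟨y, hyS, hyq⟩ := hy
      have : F0 x ≤ (μ1 (Iic y)).toReal := by rw [← hF1]; exact hyS
      refine this.trans (ENNReal.toReal_mono (measure_ne_top μ1 _)
        (measure_mono (fun w hw => lt_of_le_of_lt hw hyq)))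
    refine measure_mono_null hsub ?_
    apply lower_inter_upper_null
    · intro a b hba ha
      exact le_trans (hF0mono hba) ha
    · intro a b hab ha
      exact lt_of_lt_of_le ha (hTmono hab)
    · exact hTmeas measurableSet_Ioi
    · have h1 : μ0 {x | F0 x ≤ c} ≤ ENNReal.ofReal c := by
        have : {x | F0 x ≤ c} = {x | (μ0 (Iic x)).toReal ≤ c} := by
          ext x; rw [mem_setOf_eq, mem_setOf_eq, hF0]
        rw [this]
        exact meas_cdf_le μ0 c
      have h2 : μ0 (T ⁻¹' (Ioi (q : ℝ))) ≤ 1 - ENNReal.ofReal c := by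
        rw [hpush _ measurableSet_Ioi, ← compl_Iic,
          measure_compl measurableSet_Iic (measure_ne_top μ1 _), measure_univ]
        apply tsub_le_tsub_left
        rw [hc, ENNReal.ofReal_toReal (measure_ne_top μ1 _)]
        exact measure_mono Iio_subset_Iic_self
      calc μ0 {x | F0 x ≤ c} + μ0 (T ⁻¹' (Ioi (q : ℝ)))
          ≤ ENNReal.ofReal c + (1 - ENNReal.ofReal c) := add_le_add h1 h2
        _ = 1 := by
            apply add_tsub_cancel_of_le
            rw [hc, ENNReal.ofReal_toReal (measure_ne_top μ1 _)]
            exact prob_le_one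
  have hbad2null : ∀ q : ℚ, μ0 (bad2 q) = 0 := by
    intro q
    set d : ℝ := F1 (q : ℝ) with hd
    have hsub : bad2 q ⊆ (T ⁻¹' (Iio (q : ℝ))) ∩ {x | d < F0 x} := by
      rintro x ⟨h1, h2, h3⟩
      refine ⟨h1, ?_⟩
      -- S is bounded below since F0 x > 0
      obtain ⟨z, hz⟩ := exists_cdf_lt μ1 h3
      have hzF : F1 z < F0 x := by rw [hF1]; exact hz
      have hbd : BddBelow {w : ℝ | F0 x ≤ F1 w} := by
        refine ⟨z, fun w hw => ?_⟩
        by_contra hwz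
        push_neg at hwz
        exact absurd (le_trans hw (hF1mono hwz.le)) (not_le.2 hzF)
      rw [hQ1] at h2
      by_contra hnot
      simp only [mem_setOf_eq, not_lt] at hnot
      have hqS : (q : ℝ) ∈ {w : ℝ | F0 x ≤ F1 w} := hnot
      exact absurd (csInf_le hbd hqS) (not_le.2 h2)
    refine measure_mono_null hsub ?_
    apply lower_inter_upper_null
    · intro a b hba ha
      exact lt_of_le_of_lt (hTmono hba) ha
    · intro a b hab ha
      exact lt_of_lt_of_le ha (hF0mono hab)
    · exact hF0mono.measurable measurableSet_Ioi
    · have h1 : μ0 (T ⁻¹' (Iio (q : ℝ))) ≤ ENNReal.ofReal d := by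
        rw [hpush _ measurableSet_Iio, hd, hF1, ENNReal.ofReal_toReal (measure_ne_top μ1 _)]
        exact measure_mono Iio_subset_Iic_self
      have h2 : μ0 {x | d < F0 x} ≤ 1 - ENNReal.ofReal d := by
        have : {x | d < F0 x} = {x | d < (μ0 (Iic x)).toReal} := by
          ext x; rw [mem_setOf_eq, mem_setOf_eq, hF0]
        rw [this]
        exact meas_cdf_gt μ0 d
      calc μ0 (T ⁻¹' (Iio (q : ℝ))) + μ0 {x | d < F0 x}
          ≤ ENNReal.ofReal d + (1 - ENNReal.ofReal d) := add_le_add h1 h2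
        _ = 1 := by
            apply add_tsub_cancel_of_le
            rw [hd, hF1, ENNReal.ofReal_toReal (measure_ne_top μ1 _)]
            exact prob_le_one
  -- the set where F0 vanishes is null
  have hF0zero : μ0 {x | F0 x ≤ 0} = 0 := by
    have : {x | F0 x ≤ 0} = {x | (μ0 (Iic x)).toReal ≤ 0} := by
      ext x; rw [mem_setOf_eq, mem_setOf_eq, hF0]
    rw [this]
    exact le_antisymm (by simpa using meas_cdf_le μ0 0) (zero_le)
  -- assemble the null set
  set N : Set ℝ := {x | F0 x ≤ 0} ∪ ⋃ q : ℚ, (bad1 q ∪ bad2 q) with hN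
  have hNnull : μ0 N = 0 := by
    rw [hN]
    refine measure_union_null hF0zero (measure_iUnion_null fun q => measure_union_null
      (hbad1null q) (hbad2null q))
  rw [Filter.eventually_iff, mem_ae_iff]
  apply measure_mono_null (s := {x | T x = Q1 (F0 x)}ᶜ) (t := N) ?_ hNnull
  intro x hx
  by_contra hxN
  apply hx
  simp only [mem_compl_iff, mem_setOf_eq, not_not]
  have hxz : ¬ F0 x ≤ 0 := fun h => hxN (mem_union_left _ h)
  have hxb1 : ∀ q : ℚ, x ∉ bad1 q := fun q hq =>
    hxN (mem_union_right _ (mem_iUnion.2 ⟨q, mem_union_left _ hq⟩))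
  have hxb2 : ∀ q : ℚ, x ∉ bad2 q := fun q hq =>
    hxN (mem_union_right _ (mem_iUnion.2 ⟨q, mem_union_right _ hq⟩))
  rcases lt_trichotomy (T x) (Q1 (F0 x)) with hlt | heq | hgt
  · obtain ⟨q, hq1, hq2⟩ := exists_rat_btwn hlt
    exact absurd ⟨hq1, hq2, lt_of_not_ge hxz⟩ (hxb2 q)
  · exact heq
  · obtain ⟨q, hq1, hq2⟩ := exists_rat_btwn hgt
    exact absurd ⟨hq1, hq2⟩ (hxb1 q)
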